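/- Let A be a unital complex Banach algebra and let D, h, δ ∈ A with hδ = δh. Then the map F: ℝ → A defined by F(t) := Σ_{n≥0} D^{2n}(h+tδ)^{2n}/(2n)! (an absolutely convergent series for every t) is differentiable at t = 0, with derivative F'(0) = D·sinh(Dh)·δ, where sinh(Dh) := Σ_{n≥0} D^{2n+1}h^{2n+1}/(2n+1)!. -/

import Mathlib

open scoped Nat

lemma aux_pow {A : Type*} [NormedRing A] [NormedAlgebra ℂ A]
    (h δ : A) (hcomm : h * δ = δ * h) (k : ℕ) (x : ℝ) :
    HasDerivAt (fun t : ℝ => (h + t • δ) ^ k) (k • ((h + x • δ) ^ (k - 1) * δ)) x := by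
  induction k with
  | zero => simpa using hasDerivAt_const x (1 : A)
  | succ k ih =>
    have hc : HasDerivAt (fun t : ℝ => h + t • δ) δ x := by
      simpa using ((hasDerivAt_id x).smul_const δ).const_add h
    have H := ih.mul hc
    simp only [pow_succ] at H ⊢
    convert H using 1
    · rfl
    have hcd : (h + x • δ) * δ = δ * (h + x • δ) := by
      simp [add_mul, mul_add, hcomm, smul_mul_assoc, mul_smul_comm]
    cases k with
    | zero => simp
    | succ m =>
      have key : (h + x • δ) ^ m * δ * (h + x • δ) = (h + x • δ) ^ m * (h + x • δ) * δ := by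
        rw [mul_assoc, mul_assoc, hcd]
      simp only [Nat.add_sub_cancel] at *
      rw [succ_nsmul ((h + x • δ) ^ (m+1) * δ) (m+1)]
      rw [smul_mul_assoc, key, ← pow_succ]

lemma aux_summable_even (R : ℝ) : Summable fun n : ℕ => R ^ (2 * n) / (2 * n)! := by
  have := (Real.summable_pow_div_factorial R).comp_injective
    (i := fun n : ℕ => 2 * n) (fun a b hab => by dsimp at hab; omega)
  simpa [Function.comp_def] using this

lemma aux_summable_odd (R : ℝ) : Summable fun n : ℕ => R ^ (2 * n + 1) / (2 * n + 1)! := by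
  have := (Real.summable_pow_div_factorial R).comp_injective
    (i := fun n : ℕ => 2 * n + 1) (fun a b hab => by dsimp at hab; omega)
  simpa [Function.comp_def] using this

/-- First variation of `cosh(D(h+tδ))` at `t = 0`: the derivative is `D·sinh(Dh)·δ`,
where `h` and `δ` commute but need not commute with `D`. -/
theorem stmt_4 (A : Type*) [NormedRing A] [NormedAlgebra ℂ A] [CompleteSpace A]
    (D h δ : A) (hcomm : h * δ = δ * h) :
    (∀ t : ℝ,
      Summable fun n : ℕ => ‖(((2 * n)! : ℂ))⁻¹ • (D ^ (2 * n) * (h + t • δ) ^ (2 * n))‖) ∧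
    HasDerivAt
      (fun t : ℝ => ∑' n : ℕ, (((2 * n)! : ℂ))⁻¹ • (D ^ (2 * n) * (h + t • δ) ^ (2 * n)))
      (D * (∑' n : ℕ, (((2 * n + 1)! : ℂ))⁻¹ • (D ^ (2 * n + 1) * h ^ (2 * n + 1))) * δ)
      0 := by
  -- the summability of the series, for every t
  have hsum : ∀ t : ℝ,
      Summable fun n : ℕ => ‖(((2 * n)! : ℂ))⁻¹ • (D ^ (2 * n) * (h + t • δ) ^ (2 * n))‖ := by
    intro t
    set R : ℝ := ‖D‖ * ‖h + t • δ‖ with hR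
    have hRnn : 0 ≤ R := by positivity
    refine Summable.of_nonneg_of_le (fun n => norm_nonneg _)
      (fun n => ?_) (((aux_summable_even R).mul_left (‖(1:A)‖ + 1)))
    rcases n with _ | m
    · simp [norm_smul]
    · have h1 : 0 < 2 * (m + 1) := by omega
      have hle1 : ‖(((2 * (m+1))! : ℂ))⁻¹ • (D ^ (2 * (m+1)) * (h + t • δ) ^ (2 * (m+1)))‖
          ≤ ((2 * (m+1))! : ℝ)⁻¹ * (‖D‖ ^ (2 * (m+1)) * ‖h + t • δ‖ ^ (2 * (m+1))) := by
        rw [norm_smul, norm_inv, Complex.norm_natCast]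
        gcongr
        exact (norm_mul_le _ _).trans
          (mul_le_mul (norm_pow_le' _ h1) (norm_pow_le' _ h1) (norm_nonneg _)
            (by positivity))
      refine hle1.trans ?_
      have h2 : ((2 * (m+1))! : ℝ)⁻¹ * (‖D‖ ^ (2 * (m+1)) * ‖h + t • δ‖ ^ (2 * (m+1)))
          = R ^ (2 * (m+1)) / (2 * (m+1))! := by
        rw [hR, mul_pow]; ring
      rw [h2]
      have hone : (1 : ℝ) ≤ ‖(1:A)‖ + 1 := by linarith [norm_nonneg (1:A)]
      nlinarith [pow_nonneg hRnn (2*(m+1)),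
        inv_nonneg.mpr (le_of_lt (Nat.cast_pos.mpr (Nat.factorial_pos (2*(m+1))) : (0:ℝ) < _)),
        div_nonneg (pow_nonneg hRnn (2*(m+1))) (le_of_lt (Nat.cast_pos.mpr (Nat.factorial_pos (2*(m+1))) : (0:ℝ) < _))]
  refine ⟨hsum, ?_⟩
  -- term-wise derivatives
  set f' : ℕ → ℝ → A := fun n x =>
    (((2 * n)! : ℂ))⁻¹ • (D ^ (2 * n) * ((2 * n) • ((h + x • δ) ^ (2 * n - 1) * δ))) with hf'
  have hderiv : ∀ n : ℕ, ∀ x : ℝ,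
      HasDerivAt (fun t : ℝ => (((2 * n)! : ℂ))⁻¹ • (D ^ (2 * n) * (h + t • δ) ^ (2 * n)))
        (f' n x) x := by
    intro n x
    exact (((aux_pow h δ hcomm (2 * n) x).const_mul (D ^ (2 * n))).const_smul (((2 * n)! : ℂ))⁻¹)
  -- the uniform bound on derivatives on the ball of radius 1
  set u : ℕ → ℝ := fun n =>
    (2 * n) / (2 * n)! * (‖D‖ ^ (2 * n) * ((‖h‖ + ‖δ‖) ^ (2 * n - 1) * ‖δ‖)) with hu
  have hubound : ∀ n : ℕ, ∀ x ∈ Metric.ball (0 : ℝ) 1, ‖f' n x‖ ≤ u n := by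
    intro n x hx
    rcases n with _ | m
    · simp [hf', hu]
    · have hxle : ‖h + x • δ‖ ≤ ‖h‖ + ‖δ‖ := by
        refine (norm_add_le _ _).trans ?_
        have hxδ : ‖x • δ‖ ≤ ‖δ‖ := by
          rw [norm_smul, Real.norm_eq_abs]
          have : |x| < 1 := by simpa [Real.norm_eq_abs] using hx
          nlinarith [norm_nonneg δ, abs_nonneg x]
        linarith
      have h1 : 0 < 2 * (m + 1) := by omega
      have h2 : 0 < 2 * (m + 1) - 1 := by omega
      calc ‖f' (m+1) x‖
          = ((2*(m+1))! : ℝ)⁻¹ * ((2*(m+1) : ℕ) *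
              ‖D ^ (2*(m+1)) * ((h + x • δ) ^ (2*(m+1) - 1) * δ)‖) := by
            simp only [hf']
            rw [norm_smul, norm_inv, Complex.norm_natCast, mul_smul_comm,
              ← Nat.cast_smul_eq_nsmul ℝ, norm_smul, Real.norm_natCast]
        _ ≤ ((2*(m+1))! : ℝ)⁻¹ * ((2*(m+1) : ℕ) *
              (‖D‖ ^ (2*(m+1)) * ((‖h‖ + ‖δ‖) ^ (2*(m+1) - 1) * ‖δ‖))) := by
            have b1 : ‖D ^ (2*(m+1))‖ ≤ ‖D‖ ^ (2*(m+1)) := norm_pow_le' D h1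
            have b2 : ‖(h + x • δ) ^ (2*(m+1)-1)‖ ≤ (‖h‖ + ‖δ‖) ^ (2*(m+1)-1) :=
              (norm_pow_le' _ h2).trans (pow_le_pow_left₀ (norm_nonneg _) hxle _)
            have b3 : ‖D ^ (2*(m+1)) * ((h + x • δ) ^ (2*(m+1) - 1) * δ)‖
                ≤ ‖D‖ ^ (2*(m+1)) * ((‖h‖ + ‖δ‖) ^ (2*(m+1) - 1) * ‖δ‖) := by
              refine (norm_mul_le _ _).trans ?_
              refine mul_le_mul b1 ((norm_mul_le _ _).trans ?_) (norm_nonneg _) (by positivity)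
              exact mul_le_mul b2 le_rfl (norm_nonneg _) (by positivity)
            gcongr
        _ = u (m+1) := by
            simp only [hu]; push_cast; ring
  -- summability of the bound
  have hu_s : Summable u := by
    rw [← summable_nat_add_iff 1]
    have hs := (aux_summable_odd (‖D‖ * (‖h‖ + ‖δ‖))).mul_left (‖D‖ * ‖δ‖)
    refine hs.congr fun n => ?_
    simp only [hu]
    have e1 : 2*(n+1) - 1 = 2*n+1 := by omega
    have e2 : 2*(n+1) = (2*n+1)+1 := by omega
    rw [e1, e2, show ((2*n+1+1)! : ℕ) = (2*n+1+1) * (2*n+1)! from Nat.factorial_succ _]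
    have hfa : (0:ℝ) < ((2*n+1)! : ℝ) := by positivity
    push_cast
    rw [mul_pow]
    field_simp
    ring
  -- apply the differentiation-of-series theorem on the unit ball
  have hball : (0:ℝ) ∈ Metric.ball (0:ℝ) 1 := Metric.mem_ball_self one_pos
  have H := hasDerivAt_tsum_of_isPreconnected hu_s Metric.isOpen_ball
    (convex_ball (0:ℝ) 1).isPreconnected
    (fun n y _ => hderiv n y) hubound hball ((hsum 0).of_norm) hball
  -- identify the derivative
  have Sf'0 : Summable fun n => f' n 0 :=
    Summable.of_norm_bounded hu_s (fun n => hubound n 0 hball)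
  have hsinh : Summable fun n : ℕ => (((2 * n + 1)! : ℂ))⁻¹ • (D ^ (2 * n + 1) * h ^ (2 * n + 1)) := by
    refine Summable.of_norm (Summable.of_nonneg_of_le (fun n => norm_nonneg _)
      (fun n => ?_) (aux_summable_odd (‖D‖ * ‖h‖)))
    rw [norm_smul, norm_inv, Complex.norm_natCast]
    have h1 : 0 < 2*n+1 := by omega
    have : ‖D ^ (2*n+1) * h ^ (2*n+1)‖ ≤ ‖D‖^(2*n+1) * ‖h‖^(2*n+1) :=
      (norm_mul_le _ _).trans
        (mul_le_mul (norm_pow_le' _ h1) (norm_pow_le' _ h1) (norm_nonneg _) (by positivity))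
    rw [mul_pow, div_eq_inv_mul]
    have hfa : (0:ℝ) ≤ ((2*n+1)! : ℝ)⁻¹ := by positivity
    exact mul_le_mul_of_nonneg_left this hfa
  have hterm : ∀ n : ℕ, f' (n+1) 0
      = D * ((((2 * n + 1)! : ℂ))⁻¹ • (D ^ (2 * n + 1) * h ^ (2 * n + 1))) * δ := by
    intro n
    simp only [hf', zero_smul, add_zero]
    have e1 : 2*(n+1) - 1 = 2*n+1 := by omega
    have e2 : 2*(n+1) = (2*n+1)+1 := by omega
    rw [e1, e2]
    rw [← Nat.cast_smul_eq_nsmul ℂ, mul_smul_comm, smul_smul,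
      mul_smul_comm, smul_mul_assoc]
    congr 1
    · rw [Nat.factorial_succ]
      have h1 : ((2*n+1)! : ℂ) ≠ 0 := Nat.cast_ne_zero.mpr (Nat.factorial_ne_zero _)
      have h2 : ((2*n+1+1 : ℕ) : ℂ) ≠ 0 := Nat.cast_ne_zero.mpr (by omega)
      push_cast at h2 ⊢
      field_simp
    · rw [pow_succ']
      simp [mul_assoc]
  have heq : (∑' n, f' n 0)
      = D * (∑' n : ℕ, (((2 * n + 1)! : ℂ))⁻¹ • (D ^ (2 * n + 1) * h ^ (2 * n + 1))) * δ := by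
    rw [Summable.tsum_eq_zero_add Sf'0]
    have h0 : f' 0 0 = 0 := by simp [hf']
    rw [h0, zero_add, tsum_congr hterm,
      (hsinh.mul_left D).tsum_mul_right δ, hsinh.tsum_mul_left D]
  exact heq ▸ H
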